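/- Let σ, ν, μ be Minkowski velocities with ⟨σ,ν+σ⟩ ≠ 0, and set β := Lp(σ,ν)μ. Then the scalar products of the boosted velocity satisfy ⟨β,σ⟩ = ⟨μ,ν⟩ and ⟨β,ν⟩ = 2⟨μ,ν⟩⟨ν,σ⟩/c² − ⟨μ,σ⟩. -/
import Mathlib


noncomputable section

/-- Minkowski bilinear form on ℝ⁴ with signature +−−−. -/
def mink (u v : Fin 4 → ℝ) : ℝ := u 0 * v 0 - u 1 * v 1 - u 2 * v 2 - u 3 * v 3

/-- Passive covariant Lorentz boost determined by Minkowski velocities σ, ν. -/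
def Lp (c : ℝ) (σ ν μ : Fin 4 → ℝ) : Fin 4 → ℝ :=
  μ - (mink μ (ν + σ) / mink σ (ν + σ)) • (ν + σ) + (2 * mink μ ν / c ^ 2) • σ

lemma mink_add_left (u v w : Fin 4 → ℝ) : mink (u + v) w = mink u w + mink v w := by
  simp only [mink, Pi.add_apply]; ring

lemma mink_sub_left (u v w : Fin 4 → ℝ) : mink (u - v) w = mink u w - mink v w := by
  simp only [mink, Pi.sub_apply]; ring

lemma mink_smul_left (a : ℝ) (u w : Fin 4 → ℝ) : mink (a • u) w = a * mink u w := by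
  simp only [mink, Pi.smul_apply, smul_eq_mul]; ring

lemma mink_comm (u v : Fin 4 → ℝ) : mink u v = mink v u := by
  simp only [mink]; ring

lemma mink_add_right (u v w : Fin 4 → ℝ) : mink u (v + w) = mink u v + mink u w := by
  simp only [mink, Pi.add_apply]; ring

theorem boosted_scalar_products (c : ℝ) (hc : 0 < c) (σ ν μ : Fin 4 → ℝ)
    (hσ : mink σ σ = c ^ 2) (hν : mink ν ν = c ^ 2) (hμ : mink μ μ = c ^ 2)
    (hσνσ : mink σ (ν + σ) ≠ 0)
    (β : Fin 4 → ℝ) (hβ : β = Lp c σ ν μ) :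
    mink β σ = mink μ ν ∧
      mink β ν = 2 * mink μ ν * mink ν σ / c ^ 2 - mink μ σ := by
  have hc2 : c ^ 2 ≠ 0 := by positivity
  have hD : mink σ (ν + σ) = mink ν σ + c ^ 2 := by
    rw [mink_add_right, hσ, mink_comm]
  subst hβ
  rw [Lp]
  constructor
  · rw [mink_add_left, mink_sub_left, mink_smul_left, mink_smul_left,
      mink_comm (ν + σ) σ, div_mul_cancel₀ _ hσνσ, mink_add_right, hσ]
    field_simp
    ring
  · rw [mink_add_left, mink_sub_left, mink_smul_left, mink_smul_left,
      mink_comm (ν + σ) ν, mink_add_right ν ν σ, hν, mink_add_right μ ν σ, hD,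
      mink_comm σ ν]
    have h2 : mink ν σ + c ^ 2 ≠ 0 := hD ▸ hσνσ
    field_simp
    ring
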